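/- An asymptotically stable function F violating the finitary Ramsey theorem exists if and only if there is a coloring of the d-element subsets of ℕ with k colors having no infinite homogeneous set; consequently, since the infinite Ramsey theorem holds, for every asymptotically stable F there exists R such that every k-coloring of d-element subsets of {0,...,R} admits a homogeneous set H with |H| > F(H). -/
import Mathlib


/-- `H` is homogeneous for the colouring `C` of `d`-element finite sets:
`C` is constant on the `d`-element subsets of `H`. -/
def HomogF (k d : ℕ) (C : Finset ℕ → Fin k) (H : Finset ℕ) : Prop :=
  ∃ c : Fin k, ∀ s : Finset ℕ, s ⊆ H → s.card = d → C s = c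

/-- Homogeneity for a (possibly infinite) set `H ⊆ ℕ`. -/
def HomogS (k d : ℕ) (C : Finset ℕ → Fin k) (H : Set ℕ) : Prop :=
  ∃ c : Fin k, ∀ s : Finset ℕ, ↑s ⊆ H → s.card = d → C s = c

/-- `F` is asymptotically stable: on every increasing chain of finite sets
the value of `F` eventually stabilises. -/
def AsympStable (F : Finset ℕ → ℕ) : Prop :=
  ∀ X : ℕ → Finset ℕ, (∀ i, X i ⊆ X (i + 1)) →
    ∃ i, ∀ j, i ≤ j → F (X j) = F (X i)


/-- Infinite Ramsey theorem for `d`-element subsets of an infinite set of naturals. -/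
lemma infinite_ramsey (k : ℕ) :
    ∀ (d : ℕ) (C : Finset ℕ → Fin k) (S : Set ℕ), S.Infinite →
      ∃ T : Set ℕ, T ⊆ S ∧ T.Infinite ∧
        ∃ c : Fin k, ∀ s : Finset ℕ, ↑s ⊆ T → s.card = d → C s = c := by
  intro d
  induction d with
  | zero =>
    intro C S hS
    refine ⟨S, subset_rfl, hS, C ∅, fun s _ hs => ?_⟩
    rw [Finset.card_eq_zero.mp hs]
  | succ d ih =>
    intro C S hS
    have key : ∀ T : Set ℕ, T.Infinite → ∃ T' : Set ℕ, T'.Infinite ∧ T' ⊆ T ∧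
        (∀ x ∈ T', sInf T < x) ∧
        ∃ c : Fin k, ∀ s : Finset ℕ, ↑s ⊆ T' → s.card = d →
          C (insert (sInf T) s) = c := by
      intro T hT
      obtain ⟨T', hsub, hinf, c, hc⟩ :=
        ih (fun s => C (insert (sInf T) s)) (T \ Set.Iic (sInf T))
          (hT.diff (Set.finite_Iic _))
      refine ⟨T', hinf, hsub.trans Set.diff_subset, fun x hx => ?_, c, hc⟩
      exact not_le.mp (hsub hx).2
    let next : {T : Set ℕ // T.Infinite} → {T : Set ℕ // T.Infinite} :=
      fun T => ⟨(key T.1 T.2).choose, (key T.1 T.2).choose_spec.1⟩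
    let Sq : ℕ → {T : Set ℕ // T.Infinite} := fun n => next^[n] ⟨S, hS⟩
    let a : ℕ → ℕ := fun n => sInf (Sq n).1
    let col : ℕ → Fin k := fun n => ((key (Sq n).1 (Sq n).2).choose_spec.2.2.2).choose
    have hSq_succ : ∀ n, Sq (n + 1) = next (Sq n) := fun n =>
      Function.iterate_succ_apply' next n _
    have hsub : ∀ n, (Sq (n + 1)).1 ⊆ (Sq n).1 := by
      intro n
      rw [hSq_succ n]
      exact (key (Sq n).1 (Sq n).2).choose_spec.2.1
    have hgt : ∀ n, ∀ x ∈ (Sq (n + 1)).1, a n < x := by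
      intro n
      rw [hSq_succ n]
      exact (key (Sq n).1 (Sq n).2).choose_spec.2.2.1
    have hcol : ∀ n, ∀ s : Finset ℕ, ↑s ⊆ (Sq (n + 1)).1 → s.card = d →
        C (insert (a n) s) = col n := by
      intro n
      rw [hSq_succ n]
      exact ((key (Sq n).1 (Sq n).2).choose_spec.2.2.2).choose_spec
    have hmono : ∀ m n, n ≤ m → (Sq m).1 ⊆ (Sq n).1 := by
      intro m
      induction m with
      | zero => intro n hn; rw [Nat.le_zero.mp hn]
      | succ m ihm =>
        intro n hn
        rcases Nat.lt_or_ge n (m + 1) with h | h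
        · exact (hsub m).trans (ihm n (Nat.lt_succ_iff.mp h))
        · rw [Nat.le_antisymm hn h]
    have ha_mem : ∀ n, a n ∈ (Sq n).1 := fun n =>
      Nat.sInf_mem (Sq n).2.nonempty
    have ha_lt : StrictMono a := by
      apply strictMono_nat_of_lt_succ
      intro n
      exact hgt n (a (n + 1)) (ha_mem (n + 1))
    have haS : ∀ n, a n ∈ S := fun n => hmono n 0 (Nat.zero_le n) (ha_mem n)
    obtain ⟨c, hcfib⟩ := Finite.exists_infinite_fiber col
    have hIinf : (col ⁻¹' {c}).Infinite := Set.infinite_coe_iff.mp hcfib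
    refine ⟨a '' (col ⁻¹' {c}), ?_, ?_, c, ?_⟩
    · rintro x ⟨n, _, rfl⟩; exact haS n
    · exact hIinf.image (ha_lt.injective.injOn)
    · intro s hsT hcard
      have hne : s.Nonempty := Finset.card_pos.mp (by omega)
      set m := s.min' hne with hm
      have hmem : m ∈ s := s.min'_mem hne
      obtain ⟨n, hnI, hna⟩ := hsT hmem
      have herase : ↑(s.erase m) ⊆ (Sq (n + 1)).1 := by
        intro x hx
        have hx' : x ∈ s.erase m := hx
        have hxs : x ∈ s := Finset.mem_of_mem_erase hx'
        have hxm : x ≠ m := Finset.ne_of_mem_erase hx'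
        obtain ⟨n', _, hn'a⟩ := hsT hxs
        have hmx : m < x := lt_of_le_of_ne (s.min'_le x hxs) (Ne.symm hxm)
        have hnn' : n < n' := by
          rw [← hna, ← hn'a] at hmx
          exact ha_lt.lt_iff_lt.mp hmx
        rw [← hn'a]
        exact hmono n' (n + 1) hnn' (ha_mem n')
      have hcard' : (s.erase m).card = d := by
        rw [Finset.card_erase_of_mem hmem, hcard]; omega
      have := hcol n (s.erase m) herase hcard'
      rw [hna, Finset.insert_erase hmem] at this
      rw [this]
      exact hnI

lemma finitary_ramsey_strong (d k : ℕ) (F : Finset ℕ → ℕ) (hF : AsympStable F) :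
    ∃ R : ℕ, ∀ C : Finset ℕ → Fin k,
      ∃ H : Finset ℕ, H ⊆ Finset.range (R + 1) ∧ HomogF k d C H ∧ F H < H.card := by
  by_contra h
  push_neg at h
  -- h : ∀ R, ∃ C, ∀ H, H ⊆ range (R+1) → HomogF k d C H → H.card ≤ F H
  choose CC hCC using h
  set U : Ultrafilter ℕ := Filter.hyperfilter ℕ with hUdef
  have hsel : ∀ s : Finset ℕ, ∃ c : Fin k, {R | CC R s = c} ∈ U := by
    intro s
    obtain ⟨c, hc⟩ := Ultrafilter.eq_pure_of_finite (U.map fun R => CC R s)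
    refine ⟨c, ?_⟩
    have : {c} ∈ U.map fun R => CC R s := by rw [hc]; exact rfl
    exact this
  choose C hC using hsel
  -- every finite homogeneous set for C satisfies the bound
  have hkey : ∀ H : Finset ℕ, HomogF k d C H → H.card ≤ F H := by
    rintro H ⟨c, hc⟩
    have hA : (⋂ s ∈ (H.powersetCard d : Finset (Finset ℕ)), {R | CC R s = c}) ∈ U := by
      refine (Filter.biInter_finset_mem (f := (U : Filter ℕ)) _).mpr ?_
      intro s hs
      rw [Finset.mem_powersetCard] at hs
      have : C s = c := hc s hs.1 hs.2
      rw [← this]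
      exact hC s
    have hB : {R | H ⊆ Finset.range (R + 1)} ∈ U := by
      apply Filter.hyperfilter_le_cofinite
      rw [Filter.mem_cofinite]
      apply Set.Finite.subset (Set.finite_Iio (H.sup id))
      intro R hR
      simp only [Set.mem_compl_iff, Set.mem_setOf_eq] at hR
      by_contra hR'
      simp only [Set.mem_Iio, not_lt] at hR'
      exact hR fun x hx => Finset.mem_range.mpr
        (Nat.lt_succ_of_le (le_trans (Finset.le_sup (f := id) hx) hR'))
    obtain ⟨R, hR1, hR2⟩ := Filter.nonempty_of_mem (Filter.inter_mem hA hB)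
    refine hCC R H hR2 ⟨c, fun s hs hcard => ?_⟩
    have := Set.mem_iInter₂.mp hR1 s (Finset.mem_powersetCard.mpr ⟨hs, hcard⟩)
    exact this
  -- infinite Ramsey gives an infinite homogeneous set for C
  obtain ⟨T, -, hTinf, c, hhom⟩ := infinite_ramsey k d C Set.univ Set.infinite_univ
  have hpinf : (setOf (· ∈ T)).Infinite := hTinf
  set X : ℕ → Finset ℕ := fun i => (Finset.range i).image (Nat.nth (· ∈ T)) with hX
  have hXchain : ∀ i, X i ⊆ X (i + 1) := fun i =>
    Finset.image_subset_image (Finset.range_subset_range.mpr (Nat.le_succ i))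
  have hXcard : ∀ i, (X i).card = i := fun i => by
    rw [hX]
    rw [Finset.card_image_of_injective _ (Nat.nth_injective hpinf), Finset.card_range]
  have hXT : ∀ i, ↑(X i) ⊆ T := by
    intro i x hx
    simp only [hX, Finset.coe_image, Set.mem_image, Finset.mem_coe] at hx
    obtain ⟨j, -, rfl⟩ := hx
    exact Nat.nth_mem_of_infinite hpinf j
  have hbound : ∀ i, i ≤ F (X i) := by
    intro i
    have := hkey (X i) ⟨c, fun s hs hcard =>
      hhom s ((Finset.coe_subset.mpr hs).trans (hXT i)) hcard⟩
    rwa [hXcard i] at this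
  obtain ⟨i, hi⟩ := hF X hXchain
  have h1 := hi (i + F (X i) + 1) (by omega)
  have h2 := hbound (i + F (X i) + 1)
  omega

theorem frt_iff_ramsey_counterexample (d k : ℕ) (hd : 1 ≤ d) (hk : 1 ≤ k) :
    ((∃ F : Finset ℕ → ℕ, AsympStable F ∧
        ∀ R : ℕ, ∃ C : Finset ℕ → Fin k,
          ∀ H : Finset ℕ, H ⊆ Finset.range (R + 1) → HomogF k d C H → H.card ≤ F H) ↔
      (∃ C : Finset ℕ → Fin k, ∀ H : Set ℕ, HomogS k d C H → H.Finite)) ∧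
    (∀ F : Finset ℕ → ℕ, AsympStable F →
      ∃ R : ℕ, ∀ C : Finset ℕ → Fin k,
        ∃ H : Finset ℕ, H ⊆ Finset.range (R + 1) ∧ HomogF k d C H ∧ F H < H.card) := by
  constructor
  · constructor
    · rintro ⟨F, hF, hbad⟩
      exfalso
      obtain ⟨R, hR⟩ := finitary_ramsey_strong d k F hF
      obtain ⟨C, hCbad⟩ := hbad R
      obtain ⟨H, h1, h2, h3⟩ := hR C
      exact absurd (hCbad H h1 h2) (by omega)
    · rintro ⟨C, hfin⟩
      exfalso
      obtain ⟨T, -, hTinf, c, hhom⟩ := infinite_ramsey k d C Set.univ Set.infinite_univ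
      exact hTinf (hfin T ⟨c, hhom⟩)
  · exact fun F hF => finitary_ramsey_strong d k F hF
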